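/- A power-bounded operator T on a complex separable Hilbert space H is of class C_{·1} if and only if M(T) is dense in H. -/

import Mathlib

open Filter ContinuousLinearMap

open scoped InnerProductSpace

noncomputable section Stmt6Aux

/-- Limit of a sequence of complex numbers along an ultrafilter. -/
def philim (U : Ultrafilter ℕ) (f : ℕ → ℂ) : ℂ := lim (Ultrafilter.map f U : Filter ℂ)

theorem philim_spec (U : Ultrafilter ℕ) (f : ℕ → ℂ) (hb : ∃ c : ℝ, ∀ n, ‖f n‖ ≤ c) :
    Filter.Tendsto f U (nhds (philim U f)) := by
  obtain ⟨c, hc⟩ := hb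
  have h1 : (Ultrafilter.map f U : Filter ℂ) ≤ Filter.principal (Metric.closedBall (0 : ℂ) c) := by
    rw [Filter.le_principal_iff]
    have : ∀ n : ℕ, f n ∈ Metric.closedBall (0 : ℂ) c := by
      intro n; rw [Metric.mem_closedBall, dist_zero_right]; exact hc n
    exact Filter.mem_map.2 (Filter.mem_of_superset Filter.univ_mem (fun n _ => this n))
  obtain ⟨a, -, ha⟩ := (isCompact_closedBall (0 : ℂ) c).ultrafilter_le_nhds (Ultrafilter.map f U) h1
  have := le_nhds_lim ⟨a, ha⟩
  rwa [Filter.Tendsto, ← Ultrafilter.coe_map]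

theorem philim_eq (U : Ultrafilter ℕ) {f : ℕ → ℂ} {a : ℂ}
    (h : Filter.Tendsto f U (nhds a)) : philim U f = a := by
  have h' : (Ultrafilter.map f U : Filter ℂ) ≤ nhds a := by
    rwa [Ultrafilter.coe_map]
  exact lim_eq h'

section OpSection

variable {H : Type*} [NormedAddCommGroup H] [InnerProductSpace ℂ H] [CompleteSpace H]
variable (U : Ultrafilter ℕ) (T : H →L[ℂ] H) (C : ℝ)

/-- The Cesàro averages of `⟪(T*)ⁿ x, (T*)ⁿ y⟫`. -/
def Bf (x y : H) : ℕ → ℂ := fun N =>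
  (((N : ℝ) + 1 : ℝ) : ℂ)⁻¹ *
    ∑ n ∈ Finset.range (N + 1), ⟪(adjoint T ^ n) x, (adjoint T ^ n) y⟫_ℂ

theorem adjpow (n : ℕ) : (adjoint T) ^ n = adjoint (T ^ n) := by
  rw [← star_eq_adjoint, ← star_eq_adjoint, ← star_pow]

variable (hC : ∀ n : ℕ, ‖T ^ n‖ ≤ C) (hC0 : 0 ≤ C)

include hC in
theorem apply_norm_le (n : ℕ) (u : H) : ‖(adjoint T ^ n) u‖ ≤ C * ‖u‖ := by
  refine ((adjoint T ^ n).le_opNorm u).trans (mul_le_mul_of_nonneg_right ?_ (norm_nonneg u))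
  rw [adjpow, ← star_eq_adjoint, norm_star]
  exact hC n

include hC hC0 in
theorem Bf_bound (x y : H) (N : ℕ) : ‖Bf T x y N‖ ≤ C ^ 2 * ‖x‖ * ‖y‖ := by
  have hterm : ∀ n : ℕ, ‖⟪(adjoint T ^ n) x, (adjoint T ^ n) y⟫_ℂ‖ ≤ C ^ 2 * ‖x‖ * ‖y‖ := by
    intro n
    calc ‖⟪(adjoint T ^ n) x, (adjoint T ^ n) y⟫_ℂ‖
        ≤ ‖(adjoint T ^ n) x‖ * ‖(adjoint T ^ n) y‖ := norm_inner_le_norm _ _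
      _ ≤ (C * ‖x‖) * (C * ‖y‖) := by
          exact mul_le_mul (apply_norm_le T C hC n x) (apply_norm_le T C hC n y)
            (norm_nonneg _) (by positivity)
      _ = C ^ 2 * ‖x‖ * ‖y‖ := by ring
  have h1 : ‖∑ n ∈ Finset.range (N + 1), ⟪(adjoint T ^ n) x, (adjoint T ^ n) y⟫_ℂ‖
      ≤ ((N : ℝ) + 1) * (C ^ 2 * ‖x‖ * ‖y‖) := by
    calc ‖∑ n ∈ Finset.range (N + 1), ⟪(adjoint T ^ n) x, (adjoint T ^ n) y⟫_ℂ‖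
        ≤ ∑ n ∈ Finset.range (N + 1), ‖⟪(adjoint T ^ n) x, (adjoint T ^ n) y⟫_ℂ‖ :=
          norm_sum_le _ _
      _ ≤ ∑ _n ∈ Finset.range (N + 1), (C ^ 2 * ‖x‖ * ‖y‖) :=
          Finset.sum_le_sum (fun n _ => hterm n)
      _ = ((N : ℝ) + 1) * (C ^ 2 * ‖x‖ * ‖y‖) := by
          rw [Finset.sum_const, Finset.card_range, nsmul_eq_mul]; push_cast; ring
  have hpos : (0 : ℝ) < (N : ℝ) + 1 := by positivity
  have hninv : ‖((((N : ℝ) + 1 : ℝ)) : ℂ)⁻¹‖ = ((N : ℝ) + 1)⁻¹ := by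
    rw [norm_inv, Complex.norm_real, Real.norm_eq_abs, abs_of_pos hpos]
  rw [Bf, norm_mul, hninv]
  calc ((N : ℝ) + 1)⁻¹ * ‖∑ n ∈ Finset.range (N + 1), ⟪(adjoint T ^ n) x, (adjoint T ^ n) y⟫_ℂ‖
      ≤ ((N : ℝ) + 1)⁻¹ * (((N : ℝ) + 1) * (C ^ 2 * ‖x‖ * ‖y‖)) := by
        exact mul_le_mul_of_nonneg_left h1 (by positivity)
    _ = C ^ 2 * ‖x‖ * ‖y‖ := by field_simp

/-- The asymptotic sesquilinear form. -/
def Bsesq (x y : H) : ℂ := philim U (Bf T x y)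

include hC hC0 in
theorem Bsesq_tendsto (x y : H) :
    Filter.Tendsto (Bf T x y) U (nhds (Bsesq U T x y)) :=
  philim_spec U _ ⟨C ^ 2 * ‖x‖ * ‖y‖, Bf_bound T C hC hC0 x y⟩

include hC hC0 in
theorem Bsesq_norm_le (x y : H) : ‖Bsesq U T x y‖ ≤ C ^ 2 * ‖x‖ * ‖y‖ :=
  le_of_tendsto (Bsesq_tendsto U T C hC hC0 x y).norm
    (Filter.Eventually.of_forall (Bf_bound T C hC hC0 x y))

include hC hC0 in
theorem Bsesq_add_right (x y y' : H) :
    Bsesq U T x (y + y') = Bsesq U T x y + Bsesq U T x y' := by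
  refine philim_eq U ?_
  have h := (Bsesq_tendsto U T C hC hC0 x y).add (Bsesq_tendsto U T C hC hC0 x y')
  have he : Bf T x (y + y') = fun N => Bf T x y N + Bf T x y' N := by
    funext N
    simp only [Bf, map_add, inner_add_right, Finset.sum_add_distrib, mul_add]
  rw [he]
  exact h

include hC hC0 in
theorem Bsesq_smul_right (c : ℂ) (x y : H) :
    Bsesq U T x (c • y) = c * Bsesq U T x y := by
  refine philim_eq U ?_
  have h := (Bsesq_tendsto U T C hC hC0 x y).const_mul c
  have he : Bf T x (c • y) = fun N => c * Bf T x y N := by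
    funext N
    simp only [Bf, map_smul, inner_smul_right, ← Finset.mul_sum]
    ring
  rw [he]
  exact h

include hC hC0 in
theorem Bsesq_add_left (x x' y : H) :
    Bsesq U T (x + x') y = Bsesq U T x y + Bsesq U T x' y := by
  refine philim_eq U ?_
  have h := (Bsesq_tendsto U T C hC hC0 x y).add (Bsesq_tendsto U T C hC hC0 x' y)
  have he : Bf T (x + x') y = fun N => Bf T x y N + Bf T x' y N := by
    funext N
    simp only [Bf, map_add, inner_add_left, Finset.sum_add_distrib, mul_add]
  rw [he]
  exact h

include hC hC0 in
theorem Bsesq_smul_left (c : ℂ) (x y : H) :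
    Bsesq U T (c • x) y = (starRingEnd ℂ) c * Bsesq U T x y := by
  refine philim_eq U ?_
  have h := (Bsesq_tendsto U T C hC hC0 x y).const_mul ((starRingEnd ℂ) c)
  have he : Bf T (c • x) y = fun N => (starRingEnd ℂ) c * Bf T x y N := by
    funext N
    simp only [Bf, map_smul, inner_smul_left, ← Finset.mul_sum]
    ring
  rw [he]
  exact h

variable (hU : (U : Filter ℕ) ≤ Filter.atTop)

include hC hC0 hU in
theorem Bsesq_shift (x y : H) :
    Bsesq U T (adjoint T x) (adjoint T y) = Bsesq U T x y := by
  set a : ℕ → ℂ := fun n => ⟪(adjoint T ^ n) x, (adjoint T ^ n) y⟫_ℂ with ha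
  have hM : ∀ n, ‖a n‖ ≤ C ^ 2 * ‖x‖ * ‖y‖ := by
    intro n
    calc ‖a n‖ ≤ ‖(adjoint T ^ n) x‖ * ‖(adjoint T ^ n) y‖ := norm_inner_le_norm _ _
      _ ≤ (C * ‖x‖) * (C * ‖y‖) := mul_le_mul (apply_norm_le T C hC n x)
          (apply_norm_le T C hC n y) (norm_nonneg _) (by positivity)
      _ = C ^ 2 * ‖x‖ * ‖y‖ := by ring
  have key : ∀ N : ℕ, Bf T (adjoint T x) (adjoint T y) N
      = Bf T x y N + (((N : ℝ) + 1 : ℝ) : ℂ)⁻¹ * (a (N + 1) - a 0) := by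
    intro N
    have hterm : ∀ n : ℕ, ⟪(adjoint T ^ n) (adjoint T x), (adjoint T ^ n) (adjoint T y)⟫_ℂ
        = a (n + 1) := by
      intro n
      have h1 : ∀ u : H, (adjoint T ^ (n + 1)) u = (adjoint T ^ n) (adjoint T u) := by
        intro u
        rw [pow_succ, ContinuousLinearMap.mul_apply]
      rw [ha]
      simp only [h1]
    have hsum : ∑ n ∈ Finset.range (N + 1),
        ⟪(adjoint T ^ n) (adjoint T x), (adjoint T ^ n) (adjoint T y)⟫_ℂ
        = ∑ n ∈ Finset.range (N + 1), a n + (a (N + 1) - a 0) := by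
      rw [Finset.sum_congr rfl (fun n _ => hterm n)]
      have h2 : ∑ n ∈ Finset.range (N + 2), a n
          = (∑ n ∈ Finset.range (N + 1), a (n + 1)) + a 0 := Finset.sum_range_succ' a (N + 1)
      have h3 : ∑ n ∈ Finset.range (N + 2), a n
          = (∑ n ∈ Finset.range (N + 1), a n) + a (N + 1) := Finset.sum_range_succ a (N + 1)
      have := h2.symm.trans h3
      linear_combination this
    rw [Bf, Bf, hsum]
    ring
  have hzero : Filter.Tendsto
      (fun N : ℕ => (((N : ℝ) + 1 : ℝ) : ℂ)⁻¹ * (a (N + 1) - a 0)) Filter.atTop (nhds 0) := by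
    have hb : ∀ N : ℕ, ‖(((N : ℝ) + 1 : ℝ) : ℂ)⁻¹ * (a (N + 1) - a 0)‖
        ≤ (1 / ((N : ℝ) + 1)) * (2 * (C ^ 2 * ‖x‖ * ‖y‖)) := by
      intro N
      have hpos : (0 : ℝ) < (N : ℝ) + 1 := by positivity
      rw [norm_mul, norm_inv, Complex.norm_real, Real.norm_eq_abs, abs_of_pos hpos, one_div]
      refine mul_le_mul_of_nonneg_left ?_ (by positivity)
      calc ‖a (N + 1) - a 0‖ ≤ ‖a (N + 1)‖ + ‖a 0‖ := norm_sub_le _ _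
        _ ≤ (C ^ 2 * ‖x‖ * ‖y‖) + (C ^ 2 * ‖x‖ * ‖y‖) := add_le_add (hM _) (hM _)
        _ = 2 * (C ^ 2 * ‖x‖ * ‖y‖) := by ring
    refine squeeze_zero_norm hb ?_
    have := (tendsto_one_div_add_atTop_nhds_zero_nat :
      Filter.Tendsto (fun n : ℕ => 1 / ((n : ℝ) + 1)) Filter.atTop (nhds 0))
    have h := this.mul_const (2 * (C ^ 2 * ‖x‖ * ‖y‖))
    rw [zero_mul] at h
    exact h
  refine philim_eq U ?_
  have h1 : Filter.Tendsto
      (fun N : ℕ => Bf T x y N + (((N : ℝ) + 1 : ℝ) : ℂ)⁻¹ * (a (N + 1) - a 0)) U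
      (nhds (Bsesq U T x y + 0)) :=
    (Bsesq_tendsto U T C hC hC0 x y).add (hzero.mono_left hU)
  rw [add_zero] at h1
  have he : Bf T (adjoint T x) (adjoint T y)
      = fun N => Bf T x y N + (((N : ℝ) + 1 : ℝ) : ℂ)⁻¹ * (a (N + 1) - a 0) := funext key
  rw [he]
  exact h1

/-- The asymptotic operator: `⟪Aop x, y⟫ = Bsesq x y`. -/
def Aop (hC : ∀ n : ℕ, ‖T ^ n‖ ≤ C) (hC0 : 0 ≤ C) (x : H) : H :=
  (InnerProductSpace.toDual ℂ H).symm
    (LinearMap.mkContinuous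
      { toFun := fun y => Bsesq U T x y
        map_add' := fun y y' => Bsesq_add_right U T C hC hC0 x y y'
        map_smul' := fun c y => by
          simp only [RingHom.id_apply, smul_eq_mul]
          exact Bsesq_smul_right U T C hC hC0 c x y }
      (C ^ 2 * ‖x‖)
      (fun y => by
        simpa [mul_assoc] using Bsesq_norm_le U T C hC hC0 x y))

theorem inner_Aop (x y : H) : ⟪Aop U T C hC hC0 x, y⟫_ℂ = Bsesq U T x y := by
  rw [Aop, InnerProductSpace.toDual_symm_apply]
  rfl

include hC0 in
theorem norm_Aop_le (x : H) : ‖Aop U T C hC hC0 x‖ ≤ C ^ 2 * ‖x‖ := by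
  rw [Aop, LinearIsometryEquiv.norm_map]
  exact LinearMap.mkContinuous_norm_le _ (by positivity) _

include hU in
theorem Aop_shift (w : H) : T (Aop U T C hC hC0 (adjoint T w)) = Aop U T C hC hC0 w := by
  refine ext_inner_right ℂ (fun v => ?_)
  rw [← ContinuousLinearMap.adjoint_inner_right T, inner_Aop, inner_Aop,
    Bsesq_shift U T C hC hC0 hU]

theorem Aop_add (x x' : H) :
    Aop U T C hC hC0 (x + x') = Aop U T C hC hC0 x + Aop U T C hC hC0 x' := by
  refine ext_inner_right ℂ (fun v => ?_)
  rw [inner_Aop, inner_add_left, inner_Aop, inner_Aop, Bsesq_add_left U T C hC hC0]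

theorem Aop_smul (c : ℂ) (x : H) :
    Aop U T C hC hC0 (c • x) = c • Aop U T C hC hC0 x := by
  refine ext_inner_right ℂ (fun v => ?_)
  rw [inner_Aop, inner_smul_left, inner_Aop, Bsesq_smul_left U T C hC hC0]

include hC hC0 hU in
theorem Bsesq_re_pos (x : H)
    (hx : 0 < Filter.liminf (fun n : ℕ => ‖((adjoint T) ^ n) x‖) Filter.atTop) :
    0 < (Bsesq U T x x).re := by
  set L := Filter.liminf (fun n : ℕ => ‖((adjoint T) ^ n) x‖) Filter.atTop with hL
  have hbdd : Filter.IsBoundedUnder (· ≥ ·) Filter.atTop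
      (fun n : ℕ => ‖((adjoint T) ^ n) x‖) :=
    ⟨0, Filter.eventually_map.2 (Filter.Eventually.of_forall (fun n => norm_nonneg _))⟩
  have hev : ∀ᶠ n in Filter.atTop, L / 2 < ‖((adjoint T) ^ n) x‖ :=
    Filter.eventually_lt_of_lt_liminf (by linarith) hbdd
  obtain ⟨N₀, hN₀⟩ := Filter.eventually_atTop.1 hev
  set c : ℝ := (L / 2) ^ 2 with hc
  have hcpos : 0 < c := by positivity
  -- re of the Cesàro average
  have hre : ∀ N : ℕ, (Bf T x x N).re
      = ((N : ℝ) + 1)⁻¹ * ∑ n ∈ Finset.range (N + 1), ‖(adjoint T ^ n) x‖ ^ 2 := by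
    intro N
    rw [Bf, ← Complex.ofReal_inv, Complex.re_ofReal_mul, Complex.re_sum]
    congr 1
    refine Finset.sum_congr rfl (fun n _ => ?_)
    rw [← RCLike.re_to_complex]
    exact inner_self_eq_norm_sq _
  have hlow : ∀ᶠ N in Filter.atTop, c / 2 ≤ (Bf T x x N).re := by
    rw [Filter.eventually_atTop]
    refine ⟨2 * N₀, fun N hN => ?_⟩
    have hsub : Finset.Ico N₀ (N + 1) ⊆ Finset.range (N + 1) := by
      intro n hn
      rw [Finset.mem_Ico] at hn
      rw [Finset.mem_range]
      exact hn.2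
    have hsum1 : ∑ n ∈ Finset.Ico N₀ (N + 1), c
        ≤ ∑ n ∈ Finset.range (N + 1), ‖(adjoint T ^ n) x‖ ^ 2 := by
      refine le_trans (Finset.sum_le_sum (fun n hn => ?_))
        (Finset.sum_le_sum_of_subset_of_nonneg hsub (fun n _ _ => by positivity))
      rw [Finset.mem_Ico] at hn
      have := (hN₀ n hn.1).le
      rw [hc]
      have h0 : 0 ≤ L / 2 := by positivity
      exact pow_le_pow_left₀ h0 this 2
    have hN0le : N₀ ≤ N + 1 := by omega
    have hcard : ∑ n ∈ Finset.Ico N₀ (N + 1), c = ((N + 1 - N₀ : ℕ) : ℝ) * c := by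
      rw [Finset.sum_const, Nat.card_Ico, nsmul_eq_mul]
    have hNpos : (0 : ℝ) < (N : ℝ) + 1 := by positivity
    rw [hre N]
    have hhalf : ((N : ℝ) + 1) / 2 ≤ ((N + 1 - N₀ : ℕ) : ℝ) := by
      have : (N + 1 - N₀ : ℕ) = N + 1 - N₀ := rfl
      have h1 : ((N + 1 - N₀ : ℕ) : ℝ) = (N : ℝ) + 1 - (N₀ : ℝ) := by
        push_cast [Nat.cast_sub hN0le]
        ring
      rw [h1]
      have h2 : (N₀ : ℝ) ≤ ((N : ℝ) + 1) / 2 := by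
        have : (2 * N₀ : ℕ) ≤ N := hN
        have h3 : (2 * (N₀ : ℝ)) ≤ (N : ℝ) := by exact_mod_cast this
        linarith
      linarith
    calc c / 2 = ((N : ℝ) + 1)⁻¹ * ((((N : ℝ) + 1) / 2) * c) := by
          field_simp
      _ ≤ ((N : ℝ) + 1)⁻¹ * (((N + 1 - N₀ : ℕ) : ℝ) * c) := by
          refine mul_le_mul_of_nonneg_left ?_ (by positivity)
          exact mul_le_mul_of_nonneg_right hhalf hcpos.le
      _ = ((N : ℝ) + 1)⁻¹ * ∑ n ∈ Finset.Ico N₀ (N + 1), c := by rw [hcard]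
      _ ≤ ((N : ℝ) + 1)⁻¹ * ∑ n ∈ Finset.range (N + 1), ‖(adjoint T ^ n) x‖ ^ 2 := by
          exact mul_le_mul_of_nonneg_left hsum1 (by positivity)
  have htend : Filter.Tendsto (fun N => (Bf T x x N).re) U (nhds ((Bsesq U T x x).re)) :=
    (Complex.continuous_re.tendsto _).comp (Bsesq_tendsto U T C hC hC0 x x)
  have hge : c / 2 ≤ (Bsesq U T x x).re :=
    ge_of_tendsto htend (hlow.filter_mono hU)
  linarith

end OpSection

end Stmt6Aux

/-- `MT T` is the set of origins of bounded backward sequences of `T`. -/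
def MT {H : Type*} [NormedAddCommGroup H] [InnerProductSpace ℂ H]
    (T : H →L[ℂ] H) : Set H :=
  {x : H | ∃ xs : ℕ → H, xs 0 = x ∧ (∀ n : ℕ, T (xs (n + 1)) = xs n) ∧
    ∃ C : ℝ, ∀ n : ℕ, ‖xs n‖ ≤ C}

/-- A power-bounded operator `T` on a complex separable Hilbert space is of class
`C·₁` (i.e. `liminf ‖(T*)ⁿx‖ > 0` for every nonzero `x`) iff `M(T)` is dense in `H`. -/
theorem stmt_6
    {H : Type*} [NormedAddCommGroup H] [InnerProductSpace ℂ H] [CompleteSpace H]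
    [TopologicalSpace.SeparableSpace H]
    (T : H →L[ℂ] H) (hT : ∃ C : ℝ, ∀ n : ℕ, ‖T ^ n‖ ≤ C) :
    (∀ x : H, x ≠ 0 →
      0 < Filter.liminf (fun n : ℕ => ‖((ContinuousLinearMap.adjoint T) ^ n) x‖) Filter.atTop)
    ↔ Dense (MT T) := by
  obtain ⟨C, hC⟩ := hT
  have hC0 : 0 ≤ C := le_trans (norm_nonneg _) (hC 0)
  constructor
  · -- C·1 implies dense
    intro hC1
    set U : Ultrafilter ℕ := Ultrafilter.of Filter.atTop with hUdef
    have hU : (U : Filter ℕ) ≤ Filter.atTop := Ultrafilter.of_le _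
    -- the linear map A
    let Amap : H →ₗ[ℂ] H :=
      { toFun := Aop U T C hC hC0
        map_add' := Aop_add U T C hC hC0
        map_smul' := Aop_smul U T C hC hC0 }
    have hrange : (LinearMap.range Amap : Set H) ⊆ MT T := by
      rintro _ ⟨z, rfl⟩
      refine ⟨fun n => Aop U T C hC hC0 ((adjoint T ^ n) z), ?_, ?_, ⟨C ^ 2 * (C * ‖z‖), ?_⟩⟩
      · simp only [pow_zero, ContinuousLinearMap.one_apply]
        rfl
      · intro n
        have h1 : (adjoint T ^ (n + 1)) z = adjoint T ((adjoint T ^ n) z) := by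
          rw [pow_succ', ContinuousLinearMap.mul_apply]
        show T (Aop U T C hC hC0 ((adjoint T ^ (n + 1)) z)) = Aop U T C hC hC0 ((adjoint T ^ n) z)
        rw [h1]
        exact Aop_shift U T C hC hC0 hU _
      · intro n
        refine (norm_Aop_le U T C hC hC0 _).trans ?_
        exact mul_le_mul_of_nonneg_left (apply_norm_le T C hC n z) (by positivity)
    have horth : (LinearMap.range Amap)ᗮ = ⊥ := by
      rw [Submodule.eq_bot_iff]
      intro w hw
      by_contra hne
      have h1 : ⟪Amap w, w⟫_ℂ = 0 :=
        (Submodule.mem_orthogonal _ w).1 hw (Amap w) (LinearMap.mem_range_self _ w)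
      have h2 : ⟪Aop U T C hC hC0 w, w⟫_ℂ = Bsesq U T w w := inner_Aop U T C hC hC0 w w
      have h3 : Bsesq U T w w = 0 := by rw [← h2]; exact h1
      have h4 : 0 < (Bsesq U T w w).re :=
        Bsesq_re_pos U T C hC hC0 hU w (hC1 w hne)
      rw [h3] at h4
      simp at h4
    have hdense : Dense (LinearMap.range Amap : Set H) := by
      rw [Submodule.dense_iff_topologicalClosure_eq_top,
        Submodule.topologicalClosure_eq_top_iff]
      exact horth
    exact hdense.mono hrange
  · -- dense implies C·1
    intro hdense x hx
    have hxnorm : 0 < ‖x‖ := norm_pos_iff.2 hx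
    obtain ⟨m, hm1, hm2⟩ : ∃ m, m ∈ Metric.ball x ‖x‖ ∩ MT T := by
      rcases Metric.dense_iff.1 hdense x ‖x‖ hxnorm with ⟨m, hm⟩
      exact ⟨m, hm⟩
    have hinner : ⟪x, m⟫_ℂ ≠ 0 := by
      intro h0
      have hlt := Metric.mem_ball.1 hm1
      rw [dist_comm, dist_eq_norm] at hlt
      rw [← norm_sub_rev] at hlt
      have hps : ‖m - x‖ ^ 2 = ‖m‖ ^ 2 + ‖x‖ ^ 2 := by
        have := norm_sub_sq (𝕜 := ℂ) m x
        rw [inner_eq_zero_symm.1 h0] at this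
        simpa using this
      nlinarith [norm_nonneg m, norm_nonneg (m - x), sq_nonneg ‖m‖, hxnorm]
    obtain ⟨xs, hxs0, hxsstep, Cm, hCm⟩ := hm2
    have hmz : m ≠ 0 := by
      intro h; rw [h, inner_zero_right] at hinner; exact hinner rfl
    have hCmpos : 0 < Cm := lt_of_lt_of_le (by rw [← hxs0] at hmz; exact norm_pos_iff.2 hmz)
      (hCm 0)
    have hpow : ∀ n : ℕ, (T ^ n) (xs n) = m := by
      intro n
      induction n with
      | zero => simpa using hxs0
      | succ k ih =>
        rw [pow_succ, ContinuousLinearMap.mul_apply, hxsstep k]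
        exact ih
    have hlb : ∀ n : ℕ, ‖⟪x, m⟫_ℂ‖ / Cm ≤ ‖((ContinuousLinearMap.adjoint T) ^ n) x‖ := by
      intro n
      have h1 : ⟪((ContinuousLinearMap.adjoint T) ^ n) x, xs n⟫_ℂ = ⟪x, m⟫_ℂ := by
        rw [adjpow, ContinuousLinearMap.adjoint_inner_left, hpow n]
      have h2 : ‖⟪x, m⟫_ℂ‖ ≤ ‖((ContinuousLinearMap.adjoint T) ^ n) x‖ * Cm := by
        rw [← h1]
        exact (norm_inner_le_norm _ _).trans
          (mul_le_mul_of_nonneg_left (hCm n) (norm_nonneg _))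
      rw [div_le_iff₀ hCmpos]
      exact h2
    have hpos : 0 < ‖⟪x, m⟫_ℂ‖ / Cm := div_pos (norm_pos_iff.2 hinner) hCmpos
    refine lt_of_lt_of_le hpos ?_
    refine Filter.le_liminf_of_le ?_ (Filter.Eventually.of_forall hlb)
    refine Filter.IsBoundedUnder.isCoboundedUnder_ge ?_
    exact ⟨C * ‖x‖, Filter.eventually_map.2
      (Filter.Eventually.of_forall (fun n => apply_norm_le T C hC n x))⟩
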